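/- Let L_n be the directed linear graph on vertices 1,...,n with directed edges (i,i+1) for 1 ≤ i < n. Then the eulerian magnitude homology of L_n is nontrivial only in bidegrees (0,0) and (1,1), where it has ranks n and n−1 respectively. -/

import Mathlib

open scoped Classical

/-- Reachability in a directed graph given by its adjacency relation. -/
def dreach {V : Type} (A : V → V → Prop) : V → V → Prop :=
  Relation.ReflTransGen A

/-- Directed distance: minimal length of a directed path from `x` to `y`. -/
noncomputable def ddist {V : Type} (A : V → V → Prop) (x y : V) : ℕ :=
  sInf {n | ∃ p : Fin (n + 1) → V, p 0 = x ∧ p (Fin.last n) = y ∧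
    ∀ i : Fin n, A (p i.castSucc) (p i.succ)}

/-- Length of a tuple of vertices: sum of consecutive directed distances. -/
noncomputable def dlen {V : Type} (A : V → V → Prop) {k : ℕ} (x : Fin (k + 1) → V) : ℕ :=
  ∑ i : Fin k, ddist A (x i.castSucc) (x i.succ)

/-- Generators of the (k,ℓ) eulerian magnitude chain group of a directed graph:
tuples of k+1 pairwise distinct vertices, each reachable from the previous one,
of total length ℓ. -/
def demcGen {V : Type} (A : V → V → Prop) (k ℓ : ℕ) : Set (Fin (k + 1) → V) :=
  {x | Function.Injective x ∧ (∀ i : Fin k, dreach A (x i.castSucc) (x i.succ)) ∧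
    dlen A x = ℓ}

/-- The (k,ℓ) eulerian magnitude chain group of a directed graph. -/
abbrev dEMC {V : Type} (A : V → V → Prop) (k ℓ : ℕ) : Type :=
  demcGen A k ℓ →₀ ℤ

/-- The `i`-th face: delete the `i`-th vertex if the result is again a generator,
and `0` otherwise. -/
noncomputable def demcFace {V : Type} (A : V → V → Prop) (k ℓ : ℕ) (i : Fin (k + 2))
    (x : demcGen A (k + 1) ℓ) : dEMC A k ℓ :=
  if h : ((x : Fin (k + 2) → V) ∘ i.succAbove) ∈ demcGen A k ℓ then
    Finsupp.single ⟨_, h⟩ 1 else 0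

/-- The eulerian magnitude differential: alternating sum of interior-vertex deletions. -/
noncomputable def demcD {V : Type} (A : V → V → Prop) (k ℓ : ℕ) :
    dEMC A (k + 1) ℓ →ₗ[ℤ] dEMC A k ℓ :=
  Finsupp.lift (dEMC A k ℓ) ℤ (demcGen A (k + 1) ℓ) fun x =>
    ∑ i : Fin (k + 2),
      if i = 0 ∨ i = Fin.last (k + 1) then 0 else ((-1 : ℤ) ^ (i : ℕ)) • demcFace A k ℓ i x

/-- Cycles of the eulerian magnitude chain complex in degree `k`. -/
noncomputable def demcCycles {V : Type} (A : V → V → Prop) (k ℓ : ℕ) :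
    Submodule ℤ (dEMC A k ℓ) :=
  match k with
  | 0 => ⊤
  | k + 1 => LinearMap.ker (demcD A k ℓ)

/-- Eulerian magnitude homology of a directed graph in bidegree (k,ℓ). -/
noncomputable abbrev dEMH {V : Type} (A : V → V → Prop) (k ℓ : ℕ) :=
  demcCycles A k ℓ ⧸
    Submodule.comap (demcCycles A k ℓ).subtype (LinearMap.range (demcD A k ℓ))

/-- The directed linear graph on `n` vertices, with edges `i → i+1`. -/
def linGraph (n : ℕ) : Fin n → Fin n → Prop := fun i j => (j : ℕ) = (i : ℕ) + 1

-- paths in linGraph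
lemma lin_path_mem {n m : ℕ} {a b : Fin n} :
    m ∈ {m | ∃ p : Fin (m + 1) → Fin n, p 0 = a ∧ p (Fin.last m) = b ∧
      ∀ i : Fin m, linGraph n (p i.castSucc) (p i.succ)} ↔ (b : ℕ) = (a : ℕ) + m := by
  constructor
  · rintro ⟨p, h0, hl, hs⟩
    have key : ∀ i : Fin (m + 1), (p i : ℕ) = a + i := by
      intro i
      induction i using Fin.induction with
      | zero => simp [h0]
      | succ i ih =>
        have := hs i
        simp only [linGraph] at this
        rw [this, ih]
        simp [Fin.val_succ]
        ring
    have := key (Fin.last m)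
    rw [hl] at this
    simpa using this
  · intro h
    have hb : (a : ℕ) + m < n := by omega
    refine ⟨fun i => ⟨a + i, by omega⟩, ?_, ?_, ?_⟩
    · ext; simp
    · ext; simp [h]
    · intro i; simp [linGraph, Fin.val_succ]; ring

lemma ddist_lin {n : ℕ} {a b : Fin n} (h : a ≤ b) :
    ddist (linGraph n) a b = (b : ℕ) - (a : ℕ) := by
  have : {m | ∃ p : Fin (m + 1) → Fin n, p 0 = a ∧ p (Fin.last m) = b ∧
      ∀ i : Fin m, linGraph n (p i.castSucc) (p i.succ)} = {(b : ℕ) - (a : ℕ)} := by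
    ext m
    rw [Set.mem_singleton_iff]
    have := @lin_path_mem n m a b
    rw [this]
    have hab : (a : ℕ) ≤ b := h
    omega
  rw [ddist, this, csInf_singleton]

lemma dreach_lin_aux {n : ℕ} : ∀ (m : ℕ) (a b : Fin n), (b : ℕ) = a + m → dreach (linGraph n) a b := by
  intro m
  induction m with
  | zero =>
    intro a b h
    have : a = b := Fin.ext (by omega)
    subst this; exact Relation.ReflTransGen.refl
  | succ m ih =>
    intro a b hm
    have hb' : (a : ℕ) + m < n := by have := b.isLt; omega
    refine Relation.ReflTransGen.tail (ih a ⟨a + m, hb'⟩ (by simp)) ?_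
    simp [linGraph, hm]
    omega

lemma dreach_lin {n : ℕ} {a b : Fin n} : dreach (linGraph n) a b ↔ a ≤ b := by
  constructor
  · intro h
    induction h with
    | refl => exact le_refl _
    | tail h step ih =>
      simp only [linGraph] at step
      have : (_ : ℕ) ≤ _ := ih
      exact Fin.le_def.mpr (by omega)
  · intro h
    exact dreach_lin_aux ((b : ℕ) - a) a b (by have : (a:ℕ) ≤ b := h; omega)

lemma tele_sum : ∀ (k : ℕ) (f : Fin (k + 1) → ℕ), (∀ i : Fin k, f i.castSucc ≤ f i.succ) →
    ∑ i : Fin k, (f i.succ - f i.castSucc) = f (Fin.last k) - f 0 := by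
  intro k
  induction k with
  | zero => intro f _; simp
  | succ k ih =>
    intro f hf
    rw [Fin.sum_univ_castSucc]
    have hmono : Monotone f := Fin.monotone_iff_le_succ.mpr hf
    have h1 : ∑ i : Fin k, (f (Fin.castSucc i).succ - f (Fin.castSucc i).castSucc)
        = f (Fin.castSucc (Fin.last k)) - f 0 := by
      have := ih (f ∘ Fin.castSucc) (fun i => by
        simpa only [Function.comp_apply, Fin.succ_castSucc] using hf i.castSucc)
      simp only [Function.comp_apply, Fin.succ_castSucc] at this ⊢
      exact this
    rw [h1]
    have h2 : f 0 ≤ f (Fin.castSucc (Fin.last k)) := hmono (Fin.zero_le _)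
    have h3 : f (Fin.castSucc (Fin.last k)) ≤ f (Fin.last k).succ := hf (Fin.last k)
    have h4 : (Fin.last k).succ = Fin.last (k + 1) := Fin.succ_last k
    rw [h4]
    rw [h4] at h3
    omega

/-- Characterization of generators in the directed linear graph. -/
lemma mem_gen_iff {n k ℓ : ℕ} {x : Fin (k + 1) → Fin n} :
    x ∈ demcGen (linGraph n) k ℓ ↔ StrictMono x ∧ (x (Fin.last k) : ℕ) = (x 0 : ℕ) + ℓ := by
  constructor
  · rintro ⟨hinj, hreach, hlen⟩
    have hsm : StrictMono x := by
      rw [Fin.strictMono_iff_lt_succ]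
      intro i
      have hle : x i.castSucc ≤ x i.succ := dreach_lin.mp (hreach i)
      have hne : x i.castSucc ≠ x i.succ := fun h => by
        have h2 := hinj h
        have : (i : ℕ) = (i : ℕ) + 1 := by simpa [Fin.ext_iff] using h2
        omega
      exact lt_of_le_of_ne hle hne
    refine ⟨hsm, ?_⟩
    have hmono : Monotone x := hsm.monotone
    have : dlen (linGraph n) x = ∑ i : Fin k, ((x i.succ : ℕ) - (x i.castSucc : ℕ)) := by
      unfold dlen
      exact Finset.sum_congr rfl fun i _ => ddist_lin (hmono (Fin.castSucc_le_succ i))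
    rw [this, tele_sum k (fun i => (x i : ℕ)) (fun i => hmono (Fin.castSucc_le_succ i))] at hlen
    have : (x 0 : ℕ) ≤ x (Fin.last k) := hmono (Fin.zero_le _)
    omega
  · rintro ⟨hsm, hl⟩
    refine ⟨hsm.injective, fun i => dreach_lin.mpr (hsm.monotone (Fin.castSucc_le_succ i)), ?_⟩
    have hmono : Monotone x := hsm.monotone
    have h1 : dlen (linGraph n) x = ∑ i : Fin k, ((x i.succ : ℕ) - (x i.castSucc : ℕ)) := by
      unfold dlen
      exact Finset.sum_congr rfl fun i _ => ddist_lin (hmono (Fin.castSucc_le_succ i))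
    rw [h1, tele_sum k (fun i => (x i : ℕ)) (fun i => hmono (Fin.castSucc_le_succ i)), hl]
    omega

/-- Strictly monotone tuples grow at least linearly. -/
lemma strictMono_last_ge {n : ℕ} : ∀ (k : ℕ) (x : Fin (k + 1) → Fin n), StrictMono x →
    (x 0 : ℕ) + k ≤ (x (Fin.last k) : ℕ) := by
  intro k
  induction k with
  | zero => intro x _; simp [Fin.last]
  | succ k ih =>
    intro x hsm
    have h1 := ih (x ∘ Fin.castSucc) (hsm.comp (Fin.strictMono_castSucc))
    have h2 : x (Fin.castSucc (Fin.last k)) < x (Fin.last (k + 1)) := by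
      apply hsm
      rw [Fin.lt_def]
      simp [Fin.last]
    rw [Fin.lt_def] at h2
    simp only [Function.comp_apply] at h1
    have h3 : (Fin.castSucc (0 : Fin (k+1))) = (0 : Fin (k+2)) := rfl
    rw [h3] at h1
    omega

/-- Insert a vertex in position 1 of a tuple. -/
noncomputable def ins {V : Type} {m : ℕ} (v : V) (p : Fin (m + 1) → V) : Fin (m + 2) → V :=
  Fin.cons (p 0) (Fin.cons v (fun t : Fin m => p t.succ))

lemma ins_zero {V : Type} {m : ℕ} (v : V) (p : Fin (m + 1) → V) : ins v p 0 = p 0 :=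
  Fin.cons_zero _ _

lemma ins_one {V : Type} {m : ℕ} (v : V) (p : Fin (m + 1) → V) : ins v p 1 = v := by
  show ins v p (Fin.succ 0) = v
  rw [ins, Fin.cons_succ, Fin.cons_zero]

lemma ins_succ {V : Type} {m : ℕ} (v : V) (p : Fin (m + 1) → V) (w : Fin (m + 1)) (hw : w ≠ 0) :
    ins v p w.succ = p w := by
  obtain ⟨w', rfl⟩ := Fin.eq_succ_of_ne_zero hw
  rw [ins, Fin.cons_succ, Fin.cons_succ]

lemma ins_strictMono {V : Type} [LinearOrder V] {m : ℕ} {v : V} {p : Fin (m + 2) → V}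
    (hp : StrictMono p) (h0 : p 0 < v) (h1 : v < p 1) : StrictMono (ins v p) := by
  rw [Fin.strictMono_iff_lt_succ]
  intro i
  induction i using Fin.cases with
  | zero =>
    have e0 : Fin.castSucc (0 : Fin (m+2)) = 0 := rfl
    have e1 : Fin.succ (0 : Fin (m+2)) = 1 := rfl
    rw [e0, e1, ins_zero, ins_one]
    exact h0
  | succ j =>
    rw [← Fin.succ_castSucc]
    by_cases hj : j = 0
    · subst hj
      have e0 : Fin.castSucc (0 : Fin (m+1)) = 0 := rfl
      rw [e0, Fin.succ_zero_eq_one, ins_one,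
        ins_succ _ _ _ (Fin.succ_ne_zero 0), Fin.succ_zero_eq_one]
      exact h1
    · rw [ins_succ _ _ _ (Fin.castSucc_ne_zero_iff.mpr hj), ins_succ _ _ _ (Fin.succ_ne_zero j)]
      exact hp (Fin.castSucc_lt_succ (i := j))

lemma ins_mem {n k ℓ : ℕ} {x : Fin (k + 2) → Fin n} (hx : x ∈ demcGen (linGraph n) (k + 1) ℓ)
    {v : Fin n} (h0 : x 0 < v) (h1 : v < x 1) : ins v x ∈ demcGen (linGraph n) (k + 2) ℓ := by
  rw [mem_gen_iff] at hx ⊢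
  obtain ⟨hsm, hl⟩ := hx
  refine ⟨ins_strictMono hsm h0 h1, ?_⟩
  have hlast : Fin.last (k + 2) = (Fin.last (k + 1)).succ := (Fin.succ_last _).symm
  rw [hlast, ins_succ _ _ _ (by simp [Fin.ext_iff]), ins_zero]
  exact hl

lemma face_mem {n k ℓ : ℕ} {x : Fin (k + 2) → Fin n} (hx : x ∈ demcGen (linGraph n) (k + 1) ℓ)
    {i : Fin (k + 2)} (hi0 : i ≠ 0) (hil : i ≠ Fin.last (k + 1)) :
    x ∘ i.succAbove ∈ demcGen (linGraph n) k ℓ := by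
  rw [mem_gen_iff] at hx ⊢
  obtain ⟨hsm, hl⟩ := hx
  refine ⟨hsm.comp (Fin.strictMono_succAbove i), ?_⟩
  simp only [Function.comp_apply]
  rw [Fin.succAbove_ne_zero_zero hi0, Fin.succAbove_ne_last_last hil]
  exact hl

lemma gen_isEmpty {n k ℓ : ℕ} (h : ℓ < k) : IsEmpty ↥(demcGen (linGraph n) k ℓ) := by
  constructor
  rintro ⟨x, hx⟩
  rw [mem_gen_iff] at hx
  obtain ⟨hsm, hl⟩ := hx
  have := strictMono_last_ge k x hsm
  omega

lemma demcD_single {V : Type} (A : V → V → Prop) (k ℓ : ℕ) (x : demcGen A (k + 1) ℓ) :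
    demcD A k ℓ (Finsupp.single x 1) =
      ∑ i : Fin (k + 2),
        if i = 0 ∨ i = Fin.last (k + 1) then 0
        else ((-1 : ℤ) ^ (i : ℕ)) • demcFace A k ℓ i x := by
  rw [demcD, Finsupp.lift_apply, Finsupp.sum_single_index] <;> simp

lemma demcFace_lin {n k ℓ : ℕ} (i : Fin (k + 2)) (x : demcGen (linGraph n) (k + 1) ℓ)
    (hi0 : i ≠ 0) (hil : i ≠ Fin.last (k + 1)) :
    demcFace (linGraph n) k ℓ i x =
      Finsupp.single ⟨(x : Fin (k + 2) → Fin n) ∘ i.succAbove, face_mem x.2 hi0 hil⟩ 1 := by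
  rw [demcFace, dif_pos]

lemma vbound {n k ℓ : ℕ} (x : demcGen (linGraph n) (k + 1) ℓ) :
    ((x : Fin (k + 2) → Fin n) 0 : ℕ) + 1 < n := by
  have hx := (mem_gen_iff.mp x.2).1
  have h01 : (x : Fin (k + 2) → Fin n) 0 < (x : Fin (k + 2) → Fin n) 1 :=
    hx (by rw [Fin.lt_def]; simp)
  have := ((x : Fin (k + 2) → Fin n) 1).isLt
  rw [Fin.lt_def] at h01
  omega

/-- The cone vertex: successor of the first vertex of the tuple. -/
noncomputable def vnext {n k ℓ : ℕ} (x : demcGen (linGraph n) (k + 1) ℓ) : Fin n :=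
  ⟨((x : Fin (k + 2) → Fin n) 0 : ℕ) + 1, vbound x⟩

lemma hins_mem {n k ℓ : ℕ} (x : demcGen (linGraph n) (k + 1) ℓ)
    (h : ((x : Fin (k + 2) → Fin n) 1 : ℕ) ≠ ((x : Fin (k + 2) → Fin n) 0 : ℕ) + 1) :
    ins (vnext x) (x : Fin (k + 2) → Fin n) ∈ demcGen (linGraph n) (k + 2) ℓ := by
  refine ins_mem x.2 ?_ ?_
  · rw [Fin.lt_def]; simp [vnext]
  · rw [Fin.lt_def]
    have hx := (mem_gen_iff.mp x.2).1
    have h01 : (x : Fin (k + 2) → Fin n) 0 < (x : Fin (k + 2) → Fin n) 1 :=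
      hx (by rw [Fin.lt_def]; simp)
    rw [Fin.lt_def] at h01
    simp only [vnext]
    omega

/-- The contracting homotopy on generators. -/
noncomputable def Hfun {n : ℕ} (k ℓ : ℕ) (x : demcGen (linGraph n) (k + 1) ℓ) :
    dEMC (linGraph n) (k + 2) ℓ :=
  if h : ((x : Fin (k + 2) → Fin n) 1 : ℕ) = ((x : Fin (k + 2) → Fin n) 0 : ℕ) + 1 then 0
  else Finsupp.single ⟨ins (vnext x) (x : Fin (k + 2) → Fin n), hins_mem x h⟩ 1

noncomputable def Hmap (n k ℓ : ℕ) :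
    dEMC (linGraph n) (k + 1) ℓ →ₗ[ℤ] dEMC (linGraph n) (k + 2) ℓ :=
  Finsupp.lift _ ℤ _ (Hfun k ℓ)

lemma Hmap_single {n k ℓ : ℕ} (x : demcGen (linGraph n) (k + 1) ℓ) :
    Hmap n k ℓ (Finsupp.single x 1) = Hfun k ℓ x := by
  rw [Hmap, Finsupp.lift_apply, Finsupp.sum_single_index] <;> simp

lemma succAbove_one_of_lt {m : ℕ} {i : Fin (m + 3)} (hi : 1 < (i : ℕ)) :
    i.succAbove 1 = 1 := by
  rw [Fin.succAbove_of_castSucc_lt, Fin.castSucc_one]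
  rw [Fin.lt_def, Fin.castSucc_one]
  exact hi

lemma ins_comp_one {V : Type} {m : ℕ} (v : V) (p : Fin (m + 2) → V) :
    (ins v p) ∘ (Fin.succAbove (1 : Fin (m + 3))) = p := by
  funext t
  simp only [Function.comp_apply]
  induction t using Fin.cases with
  | zero => rw [Fin.succAbove_ne_zero_zero one_ne_zero, ins_zero]
  | succ s =>
    have h : (1 : Fin (m + 3)).succAbove s.succ = s.succ.succ := by
      simpa [Fin.succ_zero_eq_one, Fin.succAbove_zero] using
        Fin.succ_succAbove_succ (0 : Fin (m + 2)) s
    rw [h, ins_succ _ _ _ (Fin.succ_ne_zero s)]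

lemma ins_face_one {V : Type} {m : ℕ} (p : Fin (m + 3) → V) :
    ins (p 1) (p ∘ Fin.succAbove (1 : Fin (m + 3))) = p := by
  funext t
  induction t using Fin.cases with
  | zero =>
    rw [ins_zero]
    simp only [Function.comp_apply]
    rw [Fin.succAbove_ne_zero_zero one_ne_zero]
  | succ s =>
    by_cases hs : s = 0
    · subst hs; rw [Fin.succ_zero_eq_one, ins_one]
    · rw [ins_succ _ _ _ hs]
      simp only [Function.comp_apply]
      congr 1
      obtain ⟨s', rfl⟩ := Fin.eq_succ_of_ne_zero hs
      simpa [Fin.succ_zero_eq_one, Fin.succAbove_zero] using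
        (Fin.succ_succAbove_succ (0 : Fin (m + 1)) s').symm

lemma ins_comp_succ {V : Type} {m : ℕ} (v : V) (p : Fin (m + 2) → V) (j : Fin (m + 2))
    (hj : j ≠ 0) :
    (ins v p) ∘ (Fin.succAbove j.succ) = ins v (p ∘ Fin.succAbove j) := by
  funext t
  simp only [Function.comp_apply]
  induction t using Fin.cases with
  | zero =>
    rw [Fin.succAbove_ne_zero_zero (Fin.succ_ne_zero j), ins_zero, ins_zero]
    simp only [Function.comp_apply]
    rw [Fin.succAbove_ne_zero_zero hj]
  | succ s =>
    by_cases hs : s = 0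
    · subst hs
      rw [Fin.succ_zero_eq_one]
      have hv : (j : ℕ) ≠ 0 := fun h => hj (Fin.ext (by simp [h]))
      have h1 : (j.succ).succAbove 1 = 1 :=
        succAbove_one_of_lt (by rw [Fin.val_succ]; omega)
      rw [h1, ins_one, ins_one]
    · have hz : j.succAbove s ≠ 0 := Fin.succAbove_ne_zero hj hs
      rw [Fin.succ_succAbove_succ j s, ins_succ _ _ _ hz, ins_succ _ _ _ hs]
      simp only [Function.comp_apply]

lemma castSucc_le_succAbove' {m : ℕ} (a : Fin (m + 1)) (b : Fin m) :
    Fin.castSucc b ≤ a.succAbove b := by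
  by_cases h : Fin.castSucc b < a
  · rw [Fin.succAbove_of_castSucc_lt _ _ h]
  · rw [Fin.succAbove_of_le_castSucc _ _ (le_of_not_gt h)]
    exact le_of_lt (Fin.castSucc_lt_succ (i := b))

lemma one_ne_last {k : ℕ} : (1 : Fin (k + 3)) ≠ Fin.last (k + 2) := by
  intro hh
  have := congrArg Fin.val hh
  simp [Fin.last] at this

/-- entries of a generator grow: `X 1 ≥ X 0 + 1`, and `X` monotone -/
lemma gen_mono {n k ℓ : ℕ} (x : demcGen (linGraph n) (k + 1) ℓ) :
    StrictMono (x : Fin (k + 2) → Fin n) := (mem_gen_iff.mp x.2).1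

lemma homotopy_single {n k ℓ : ℕ} (x : demcGen (linGraph n) (k + 2) ℓ) :
    demcD (linGraph n) (k + 2) ℓ (Hmap n (k + 1) ℓ (Finsupp.single x 1)) +
      Hmap n k ℓ (demcD (linGraph n) (k + 1) ℓ (Finsupp.single x 1)) =
      - Finsupp.single x 1 := by
  have hsm : StrictMono (x : Fin (k + 3) → Fin n) := gen_mono x
  set X : Fin (k + 3) → Fin n := (x : Fin (k + 3) → Fin n) with hX
  have h01 : (X 0 : ℕ) < X 1 := hsm (by rw [Fin.lt_def]; simp)
  have h12 : (X 1 : ℕ) < X 2 := hsm (by rw [Fin.lt_def]; simp [Nat.mod_eq_of_lt (show 2 < k + 3 by omega)])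
  by_cases h : (X 1 : ℕ) = (X 0 : ℕ) + 1
  · -- case A : the cone vertex is already in the tuple
    have hH : Hmap n (k + 1) ℓ (Finsupp.single x 1) = 0 := by
      rw [Hmap_single, Hfun, dif_pos h]
    rw [hH, map_zero, zero_add, demcD_single, map_sum]
    rw [Finset.sum_eq_single (1 : Fin (k + 3))]
    · rw [if_neg (by push_neg; exact ⟨one_ne_zero, one_ne_last⟩)]
      rw [demcFace_lin 1 x one_ne_zero one_ne_last, map_smul, Hmap_single, Hfun]
      rw [dif_neg ?hc]
      case hc =>
        simp only [Function.comp_apply]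
        rw [Fin.succAbove_ne_zero_zero one_ne_zero]
        have e2 : (1 : Fin (k + 3)).succAbove 1 = 2 := by
          rw [Fin.succAbove_of_le_castSucc _ _ (le_of_eq (Fin.castSucc_one).symm)]
          rfl
        rw [e2]
        simp only [← hX]
        omega
      have hv : (vnext ⟨X ∘ Fin.succAbove 1, face_mem x.2 one_ne_zero one_ne_last⟩ : Fin n)
          = X 1 := by
        rw [Fin.ext_iff]
        simp only [vnext, Function.comp_apply]
        rw [Fin.succAbove_ne_zero_zero one_ne_zero]
        omega
      have key : ∀ (a : demcGen (linGraph n) (k + 2) ℓ), a = x →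
          ((-1 : ℤ) ^ ((1 : Fin (k + 3)) : ℕ)) • Finsupp.single a (1 : ℤ) =
            -Finsupp.single x (1 : ℤ) := by
        rintro a rfl; simp
      refine key _ (Subtype.ext ?_)
      show ins (vnext ⟨X ∘ Fin.succAbove 1, face_mem x.2 one_ne_zero one_ne_last⟩)
          (X ∘ Fin.succAbove 1) = X
      rw [hv]
      exact ins_face_one X
    · intro i _ hi
      by_cases hiz : i = 0 ∨ i = Fin.last (k + 2)
      · rw [if_pos hiz, map_zero]
      · push_neg at hiz
        rw [if_neg (by push_neg; exact hiz), demcFace_lin i x hiz.1 hiz.2, map_smul,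
          Hmap_single, Hfun, dif_pos ?hc2, smul_zero]
        case hc2 =>
          simp only [Function.comp_apply]
          rw [Fin.succAbove_ne_zero_zero hiz.1]
          have hi2 : 1 < (i : ℕ) := by
            have h0 : (i : ℕ) ≠ 0 := fun hh => hiz.1 (Fin.ext (by simp [hh]))
            have h1 : (i : ℕ) ≠ 1 := fun hh => hi (Fin.ext (by simp [hh]))
            omega
          rw [succAbove_one_of_lt hi2]
          exact h
    · intro hmem
      exact absurd (Finset.mem_univ _) hmem
  · -- case B : insert the cone vertex
    have hy : ins (vnext x) X ∈ demcGen (linGraph n) (k + 3) ℓ := hins_mem x h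
    set y : demcGen (linGraph n) (k + 3) ℓ := ⟨ins (vnext x) X, hy⟩ with hydef
    have hH : Hmap n (k + 1) ℓ (Finsupp.single x 1) = Finsupp.single y 1 := by
      rw [Hmap_single, Hfun, dif_neg h]
    rw [hH, demcD_single (linGraph n) (k + 2) ℓ y, demcD_single (linGraph n) (k + 1) ℓ x,
      map_sum, Fin.sum_univ_succ, if_pos (Or.inl rfl), zero_add, ← Finset.sum_add_distrib]
    rw [Finset.sum_eq_single (0 : Fin (k + 3))]
    · rw [if_pos (Or.inl rfl), map_zero, add_zero, Fin.succ_zero_eq_one]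
      rw [if_neg (by push_neg; exact ⟨one_ne_zero, one_ne_last⟩)]
      rw [demcFace_lin 1 y one_ne_zero one_ne_last]
      have key : ∀ (a : demcGen (linGraph n) (k + 2) ℓ), a = x →
          ((-1 : ℤ) ^ ((1 : Fin (k + 4)) : ℕ)) • Finsupp.single a (1 : ℤ) =
            -Finsupp.single x (1 : ℤ) := by
        rintro a rfl; simp
      refine key _ (Subtype.ext ?_)
      show (y : Fin (k + 4) → Fin n) ∘ Fin.succAbove 1 = X
      have : (y : Fin (k + 4) → Fin n) = ins (vnext x) X := rfl
      rw [this]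
      exact ins_comp_one (vnext x) X
    · intro j _ hj0
      by_cases hjl : j = Fin.last (k + 2)
      · subst hjl
        rw [if_pos (Or.inr rfl), map_zero, add_zero, Fin.succ_last,
          if_pos (Or.inr rfl)]
      · have hsz : j.succ ≠ (0 : Fin (k + 4)) := Fin.succ_ne_zero j
        have hsl : j.succ ≠ Fin.last (k + 3) := (Fin.succ_ne_last_iff j).mpr hjl
        rw [if_neg (by push_neg; exact ⟨hsz, hsl⟩),
          if_neg (by push_neg; exact ⟨hj0, hjl⟩)]
        rw [demcFace_lin j.succ y hsz hsl, demcFace_lin j x hj0 hjl, map_smul, Hmap_single,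
          Hfun, dif_neg ?hc3]
        case hc3 =>
          simp only [Function.comp_apply]
          rw [Fin.succAbove_ne_zero_zero hj0]
          have hle : (1 : Fin (k + 3)) ≤ j.succAbove 1 := by
            have := castSucc_le_succAbove' j (1 : Fin (k + 2))
            rwa [Fin.castSucc_one] at this
          have hmx : (X 1 : ℕ) ≤ (X (j.succAbove 1) : ℕ) := by
            have := hsm.monotone hle
            rwa [Fin.le_def] at this
          simp only [← hX]
          omega
        -- now both terms are singles over the same generator
        have hveq : (vnext ⟨X ∘ Fin.succAbove j, face_mem x.2 hj0 hjl⟩ : Fin n) = vnext x := by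
          rw [Fin.ext_iff]
          simp only [vnext, Function.comp_apply]
          rw [Fin.succAbove_ne_zero_zero hj0]
        have hface : (y : Fin (k + 4) → Fin n) ∘ Fin.succAbove j.succ =
            ins (vnext ⟨X ∘ Fin.succAbove j, face_mem x.2 hj0 hjl⟩) (X ∘ Fin.succAbove j) := by
          have : (y : Fin (k + 4) → Fin n) = ins (vnext x) X := rfl
          rw [this, hveq]
          exact ins_comp_succ (vnext x) X j hj0
        have key2 : ∀ (a b : demcGen (linGraph n) (k + 2) ℓ), a = b →
            ((-1 : ℤ) ^ ((j.succ : Fin (k + 4)) : ℕ)) • Finsupp.single a (1 : ℤ) +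
              ((-1 : ℤ) ^ ((j : Fin (k + 3)) : ℕ)) • Finsupp.single b (1 : ℤ) = 0 := by
          rintro a b rfl
          have hp : ((-1 : ℤ) ^ ((j.succ : Fin (k + 4)) : ℕ)) =
              -((-1 : ℤ) ^ ((j : Fin (k + 3)) : ℕ)) := by
            rw [Fin.val_succ, pow_succ]
            ring
          rw [hp, neg_smul, neg_add_cancel]
        exact key2 _ _ (Subtype.ext hface)
    · intro hmem
      exact absurd (Finset.mem_univ _) hmem

lemma homotopy_eq {n k ℓ : ℕ} (c : dEMC (linGraph n) (k + 2) ℓ) :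
    demcD (linGraph n) (k + 2) ℓ (Hmap n (k + 1) ℓ c) +
      Hmap n k ℓ (demcD (linGraph n) (k + 1) ℓ c) = -c := by
  have hmap : (demcD (linGraph n) (k + 2) ℓ).comp (Hmap n (k + 1) ℓ) +
      (Hmap n k ℓ).comp (demcD (linGraph n) (k + 1) ℓ) = -LinearMap.id := by
    refine Finsupp.lhom_ext fun a b => ?_
    have hb : (Finsupp.single a b : dEMC (linGraph n) (k + 2) ℓ) =
        b • Finsupp.single a (1 : ℤ) := by rw [Finsupp.smul_single', mul_one]
    rw [hb]
    simp only [LinearMap.add_apply, LinearMap.comp_apply, LinearMap.neg_apply,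
      LinearMap.id_apply, map_smul]
    rw [homotopy_single a]
  have := LinearMap.ext_iff.mp hmap c
  simpa using this

lemma homotopy_single_one {n ℓ : ℕ} (hℓ : 2 ≤ ℓ) (x : demcGen (linGraph n) 1 ℓ) :
    demcD (linGraph n) 1 ℓ (Hmap n 0 ℓ (Finsupp.single x 1)) = -Finsupp.single x 1 := by
  have hx := mem_gen_iff.mp x.2
  have hl : ((x : Fin 2 → Fin n) (Fin.last 1) : ℕ) = ((x : Fin 2 → Fin n) 0 : ℕ) + ℓ := hx.2
  have hl1 : ((x : Fin 2 → Fin n) 1 : ℕ) = ((x : Fin 2 → Fin n) 0 : ℕ) + ℓ := hl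
  have hcond : ((x : Fin 2 → Fin n) 1 : ℕ) ≠ ((x : Fin 2 → Fin n) 0 : ℕ) + 1 := by omega
  have hH : Hmap n 0 ℓ (Finsupp.single x 1) =
      Finsupp.single ⟨ins (vnext x) (x : Fin 2 → Fin n), hins_mem x hcond⟩ 1 := by
    rw [Hmap_single, Hfun, dif_neg hcond]
  rw [hH, demcD_single]
  rw [Fin.sum_univ_three]
  rw [if_pos (Or.inl rfl), if_neg (by decide), if_pos (Or.inr (by decide))]
  rw [zero_add, add_zero]
  rw [demcFace_lin 1 _ (by decide) (by decide)]
  have key : ∀ (a : demcGen (linGraph n) 1 ℓ), a = x →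
      ((-1 : ℤ) ^ ((1 : Fin 3) : ℕ)) • Finsupp.single a (1 : ℤ) =
        -Finsupp.single x (1 : ℤ) := by
    rintro a rfl; simp
  refine key _ (Subtype.ext ?_)
  show (↑(⟨ins (vnext x) (x : Fin 2 → Fin n), hins_mem x hcond⟩ :
      demcGen (linGraph n) 2 ℓ) : Fin 3 → Fin n) ∘ Fin.succAbove 1 = (x : Fin 2 → Fin n)
  exact ins_comp_one (vnext x) (x : Fin 2 → Fin n)

lemma homotopy_eq_one {n ℓ : ℕ} (hℓ : 2 ≤ ℓ) (c : dEMC (linGraph n) 1 ℓ) :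
    demcD (linGraph n) 1 ℓ (Hmap n 0 ℓ c) = -c := by
  have hmap : (demcD (linGraph n) 1 ℓ).comp (Hmap n 0 ℓ) = -LinearMap.id := by
    refine Finsupp.lhom_ext fun a b => ?_
    have hb : (Finsupp.single a b : dEMC (linGraph n) 1 ℓ) =
        b • Finsupp.single a (1 : ℤ) := by rw [Finsupp.smul_single', mul_one]
    rw [hb]
    simp only [LinearMap.comp_apply, LinearMap.neg_apply, LinearMap.id_apply, map_smul]
    rw [homotopy_single_one hℓ a, smul_neg]
  have := LinearMap.ext_iff.mp hmap c
  simpa using this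

lemma demcD_zero (n ℓ : ℕ) : demcD (linGraph n) 0 ℓ = 0 := by
  refine Finsupp.lhom_ext fun a b => ?_
  rw [demcD, Finsupp.lift_apply, Finsupp.sum_single_index (by simp)]
  have : ∑ i : Fin 2, (if i = 0 ∨ i = Fin.last 1 then 0
      else ((-1 : ℤ) ^ (i : ℕ)) • demcFace (linGraph n) 0 ℓ i a) = 0 := by
    apply Finset.sum_eq_zero
    intro i _
    refine Fin.cases ?_ ?_ i
    · rw [if_pos (Or.inl rfl)]
    · intro j
      have hj : j.succ = Fin.last 1 := by
        have : j = 0 := Subsingleton.elim j 0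
        subst this; rfl
      rw [if_pos (Or.inr hj)]
  rw [this, smul_zero]
  simp

lemma emc_subsingleton {n k ℓ : ℕ} (h : IsEmpty ↥(demcGen (linGraph n) k ℓ)) :
    Subsingleton (dEMC (linGraph n) k ℓ) :=
  ⟨fun a b => Finsupp.ext fun s => h.elim s⟩

lemma emh_ss {n k ℓ : ℕ}
    (hle : ∀ z : dEMC (linGraph n) k ℓ, z ∈ demcCycles (linGraph n) k ℓ →
      z ∈ LinearMap.range (demcD (linGraph n) k ℓ)) :
    Subsingleton (dEMH (linGraph n) k ℓ) := by
  refine Submodule.Quotient.subsingleton_iff.mpr ?_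
  rw [Submodule.eq_top_iff']
  intro x
  rw [Submodule.mem_comap]
  exact hle x x.2

noncomputable def equiv00 (n : ℕ) : ↥(demcGen (linGraph n) 0 0) ≃ Fin n where
  toFun x := (x : Fin 1 → Fin n) 0
  invFun a := ⟨fun _ => a, fun i j _ => Fin.ext (by omega), fun i => i.elim0,
    by simp [dlen]⟩
  left_inv x := Subtype.ext (funext fun i => by rw [show i = 0 from Fin.ext (by omega)])
  right_inv a := rfl

noncomputable def equiv11 (n : ℕ) : ↥(demcGen (linGraph n) 1 1) ≃ Fin (n - 1) where
  toFun x := ⟨((x : Fin 2 → Fin n) 0 : ℕ), by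
    have hx := (mem_gen_iff.mp x.2).2
    have := ((x : Fin 2 → Fin n) (Fin.last 1)).isLt
    omega⟩
  invFun a := ⟨![⟨(a : ℕ), by have := a.isLt; omega⟩, ⟨(a : ℕ) + 1, by have := a.isLt; omega⟩],
    by
      refine mem_gen_iff.mpr ⟨?_, ?_⟩
      · rw [Fin.strictMono_iff_lt_succ]
        intro i
        have : i = 0 := Subsingleton.elim i 0
        subst this
        show (⟨(a : ℕ), _⟩ : Fin n) < ⟨(a : ℕ) + 1, _⟩
        rw [Fin.lt_def]
        simp
      · show ((⟨(a : ℕ) + 1, _⟩ : Fin n) : ℕ) = ((⟨(a : ℕ), _⟩ : Fin n) : ℕ) + 1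
        rfl⟩
  left_inv x := by
    have hx := (mem_gen_iff.mp x.2).2
    refine Subtype.ext (funext fun i => ?_)
    refine Fin.cases ?_ ?_ i
    · exact Fin.ext rfl
    · intro j
      have : j = 0 := Subsingleton.elim j 0
      subst this
      refine (Fin.ext ?_).symm
      show ((x : Fin 2 → Fin n) (Fin.succ 0) : ℕ) = ((x : Fin 2 → Fin n) 0 : ℕ) + 1
      exact hx
  right_inv a := Fin.ext rfl

lemma finrank_emc {n k ℓ : ℕ} [Fintype ↥(demcGen (linGraph n) k ℓ)] :
    Module.finrank ℤ (dEMC (linGraph n) k ℓ) = Fintype.card ↥(demcGen (linGraph n) k ℓ) :=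
  Module.finrank_eq_card_basis Finsupp.basisSingleOne

lemma cycles_one (ℓ n : ℕ) : demcCycles (linGraph n) 1 ℓ = LinearMap.ker (demcD (linGraph n) 0 ℓ) :=
  rfl

lemma cycles_zero (ℓ n : ℕ) : demcCycles (linGraph n) 0 ℓ = ⊤ := rfl


/-- eulerian magnitude homology of the directed linear graph `L_n` is
nontrivial only in bidegrees (0,0) and (1,1), of ranks `n` and `n-1` respectively. -/
theorem emh_directed_linear_graph (n : ℕ) :
    Module.finrank ℤ (dEMH (linGraph n) 0 0) = n ∧
    Module.finrank ℤ (dEMH (linGraph n) 1 1) = n - 1 ∧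
    ∀ k ℓ : ℕ, ¬ (k = 0 ∧ ℓ = 0) → ¬ (k = 1 ∧ ℓ = 1) →
      Subsingleton (dEMH (linGraph n) k ℓ) := by
  refine ⟨?_, ?_, ?_⟩
  · have hD : demcD (linGraph n) 0 0 = 0 := by
      haveI := emc_subsingleton (gen_isEmpty (n := n) (k := 1) (ℓ := 0) (by omega))
      exact LinearMap.ext fun c => by rw [Subsingleton.elim c 0, map_zero, map_zero]
    have hcomap : Submodule.comap (demcCycles (linGraph n) 0 0).subtype
        (LinearMap.range (demcD (linGraph n) 0 0)) = ⊥ := by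
      rw [hD, LinearMap.range_zero, Submodule.comap_bot, Submodule.ker_subtype]
    haveI : Fintype ↥(demcGen (linGraph n) 0 0) := Fintype.ofFinite _
    have e := (Submodule.quotEquivOfEqBot _ hcomap).trans
      ((LinearEquiv.ofEq _ _ (cycles_zero 0 n)).trans Submodule.topEquiv)
    rw [e.finrank_eq, finrank_emc, Fintype.card_congr (equiv00 n), Fintype.card_fin]
  · have hD : demcD (linGraph n) 1 1 = 0 := by
      haveI := emc_subsingleton (gen_isEmpty (n := n) (k := 2) (ℓ := 1) (by omega))
      exact LinearMap.ext fun c => by rw [Subsingleton.elim c 0, map_zero, map_zero]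
    have hcomap : Submodule.comap (demcCycles (linGraph n) 1 1).subtype
        (LinearMap.range (demcD (linGraph n) 1 1)) = ⊥ := by
      rw [hD, LinearMap.range_zero, Submodule.comap_bot, Submodule.ker_subtype]
    have hc : demcCycles (linGraph n) 1 1 = ⊤ := by
      rw [cycles_one, demcD_zero, LinearMap.ker_zero]
    haveI : Fintype ↥(demcGen (linGraph n) 1 1) := Fintype.ofFinite _
    have e := (Submodule.quotEquivOfEqBot _ hcomap).trans
      ((LinearEquiv.ofEq _ _ hc).trans Submodule.topEquiv)
    rw [e.finrank_eq, finrank_emc, Fintype.card_congr (equiv11 n), Fintype.card_fin]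
  · intro k ℓ h00 h11
    rcases k with _ | k
    · have hemp : IsEmpty ↥(demcGen (linGraph n) 0 ℓ) := by
        constructor
        rintro ⟨x, hx⟩
        have hne : ℓ ≠ 0 := fun h => h00 ⟨rfl, h⟩
        have h2 := (mem_gen_iff.mp hx).2
        have : Fin.last 0 = (0 : Fin 1) := rfl
        rw [this] at h2
        omega
      haveI := emc_subsingleton hemp
      exact emh_ss fun z _ => by rw [Subsingleton.elim z 0]; exact Submodule.zero_mem _
    rcases k with _ | k
    · rcases Nat.lt_or_ge ℓ 2 with hℓ | hℓ
      · rcases ℓ with _ | ℓ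
        · haveI := emc_subsingleton (gen_isEmpty (n := n) (k := 1) (ℓ := 0) (by omega))
          exact emh_ss fun z _ => by rw [Subsingleton.elim z 0]; exact Submodule.zero_mem _
        · have : ℓ = 0 := by omega
          subst this
          exact absurd ⟨rfl, rfl⟩ h11
      · refine emh_ss fun z _ => ?_
        refine ⟨-(Hmap n 0 ℓ z), ?_⟩
        rw [map_neg, homotopy_eq_one hℓ, neg_neg]
    · refine emh_ss fun z hz => ?_
      have hzc : demcD (linGraph n) (k + 1) ℓ z = 0 := hz
      refine ⟨-(Hmap n (k + 1) ℓ z), ?_⟩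
      have hh := homotopy_eq (n := n) (k := k) (ℓ := ℓ) z
      rw [hzc, map_zero, add_zero] at hh
      rw [map_neg, hh, neg_neg]
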